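/- The Stieltjes transform m_sc(z) = ∫_{-2}^{2} ρ_sc(x)/(x - z) dx of the semicircle density ρ_sc(x) = √(4 - x²)/(2π) satisfies the self-consistent equation 1 + z·m_sc(z) + m_sc(z)² = 0 for all z in the upper half-plane. -/

import Mathlib

open Real intervalIntegral Complex

noncomputable def al (c : ℂ) : ℂ := ((2+c)/(2-c)) ^ ((1/2 : ℂ))

lemma two_sub_ne {c : ℂ} (hc : c.im ≠ 0) : (2:ℂ) - c ≠ 0 := by
  intro h; exact hc (by simpa using congrArg Complex.im h)

lemma two_add_ne {c : ℂ} (hc : c.im ≠ 0) : (2:ℂ) + c ≠ 0 := by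
  intro h; exact hc (by simpa using congrArg Complex.im h)

lemma moeb_im {β : ℂ} (hβ : β.im ≠ 0) : (((1:ℂ)+β)/(1-β)).im ≠ 0 := by
  have h1 : (1:ℂ) - β ≠ 0 := by
    intro h
    have := congrArg Complex.im h
    simp at this
    exact hβ this
  have hn : Complex.normSq (1-β) ≠ 0 := by simpa [map_eq_zero] using h1
  rw [Complex.div_im]
  have : ((1:ℂ)+β).im * ((1:ℂ)-β).re / Complex.normSq (1-β)
      - ((1:ℂ)+β).re * ((1:ℂ)-β).im / Complex.normSq (1-β)
      = 2*β.im / Complex.normSq (1-β) := by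
    simp only [Complex.add_im, Complex.add_re, Complex.one_im, Complex.one_re,
      Complex.sub_im, Complex.sub_re]
    ring
  rw [this]
  exact div_ne_zero (by simpa using hβ) hn

lemma w_im {c : ℂ} (hc : c.im ≠ 0) : (((2:ℂ)+c)/(2-c)).im ≠ 0 := by
  have h2 : (2:ℂ) - c ≠ 0 := two_sub_ne hc
  have h3 : (1:ℂ) - c/2 ≠ 0 := by
    intro h
    have := congrArg Complex.im h
    simp [Complex.div_ofNat_im] at this
    exact hc this
  have hh : ((2:ℂ)+c)/(2-c) = (1+c/2)/(1-c/2) := by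
    rw [div_eq_div_iff h2 h3]; ring
  rw [hh]
  apply moeb_im
  simp [Complex.div_ofNat_im]
  exact hc

lemma al_mul {c : ℂ} (hc : c.im ≠ 0) : al c * al c = (2+c)/(2-c) := by
  have hw0 : ((2:ℂ)+c)/(2-c) ≠ 0 := div_ne_zero (two_add_ne hc) (two_sub_ne hc)
  rw [al, ← Complex.cpow_add _ _ hw0]
  norm_num

lemma al_im {c : ℂ} (hc : c.im ≠ 0) : (al c).im ≠ 0 := by
  intro h
  apply w_im hc
  rw [← al_mul hc, Complex.mul_im, h]
  ring

lemma al_ne {c : ℂ} (hc : c.im ≠ 0) : al c ≠ 0 := by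
  intro h; exact al_im hc (by rw [h]; simp)

lemma logdiff {Q : ℂ} (hQ : Q.im ≠ 0) :
    (Complex.log Q - Complex.log (-Q))^2 = -(Real.pi:ℂ)^2 := by
  have habs : ‖-Q‖ = ‖Q‖ := by simp
  rcases lt_or_gt_of_ne hQ with h | h
  · have harg : Complex.arg (-Q) = Complex.arg Q + Real.pi :=
      Complex.arg_neg_eq_arg_add_pi_of_im_neg h
    have : Complex.log Q - Complex.log (-Q) = -((Real.pi:ℂ) * Complex.I) := by
      apply Complex.ext
      · simp [Complex.log_re, habs]
      · simp [Complex.log_im, harg]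
    rw [this]
    rw [neg_pow, mul_pow, Complex.I_sq]
    ring
  · have harg : Complex.arg (-Q) = Complex.arg Q - Real.pi :=
      Complex.arg_neg_eq_arg_sub_pi_of_im_pos h
    have : Complex.log Q - Complex.log (-Q) = (Real.pi:ℂ) * Complex.I := by
      apply Complex.ext
      · simp [Complex.log_re, habs]
      · simp [Complex.log_im, harg]
    rw [this, mul_pow, Complex.I_sq]
    ring

lemma denom_ne {c : ℂ} (hc : c.im ≠ 0) (x : ℝ) : 2*(x:ℂ) - c ≠ 0 := by
  intro h
  have := congrArg Complex.im h
  simp at this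
  exact hc this

lemma K_eval (c : ℂ) (hc : c.im ≠ 0) :
    ∫ θ in (0:ℝ)..(Real.pi/2), 1/(2*(Real.cos θ : ℂ) - c)
      = (1/((2-c) * al c)) * Complex.log ((1 + al c)/(1 - al c)) := by
  have hdenom : ∀ θ : ℝ, 2*(Real.cos θ:ℂ) - c ≠ 0 := fun θ => denom_ne hc (Real.cos θ)
  have ha := al_im hc
  have ha0 := al_ne hc
  have h2c := two_sub_ne hc
  set a := al c with hadef
  set B : ℂ := 1/((2-c) * a) with hB
  set G : ℝ → ℂ := fun θ =>
    B * Complex.log ((1 + a * (Real.tan (θ/2):ℂ))/(1 - a * (Real.tan (θ/2):ℂ))) with hG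
  have key : ∀ θ ∈ Set.uIcc (0:ℝ) (Real.pi/2),
      HasDerivAt G (1/(2*(Real.cos θ:ℂ) - c)) θ := by
    intro θ hθ
    rw [Set.uIcc_of_le (by positivity)] at hθ
    obtain ⟨h0, h1⟩ := hθ
    have hpi := Real.pi_pos
    have hco : 0 < Real.cos (θ/2) :=
      Real.cos_pos_of_mem_Ioo ⟨by linarith, by linarith⟩
    have ht0 : 0 ≤ Real.tan (θ/2) := by
      rw [Real.tan_eq_sin_div_cos]
      exact div_nonneg (Real.sin_nonneg_of_nonneg_of_le_pi (by linarith) (by linarith)) hco.le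
    set r : ℝ := Real.tan (θ/2) with hr
    have hd : (1:ℂ) - a * (r:ℂ) ≠ 0 := by
      rcases eq_or_lt_of_le ht0 with h | h
      · rw [← h]; norm_num
      · intro hh
        have := congrArg Complex.im hh
        simp at this
        rcases this with h' | h'
        · exact ha h'
        · exact h.ne' h'
    have hn : (1:ℂ) + a * (r:ℂ) ≠ 0 := by
      rcases eq_or_lt_of_le ht0 with h | h
      · rw [← h]; norm_num
      · intro hh
        have := congrArg Complex.im hh
        simp at this
        rcases this with h' | h'
        · exact ha h'
        · exact h.ne' h'
    have hQ : (1 + a * (r:ℂ))/(1 - a * (r:ℂ)) ∈ Complex.slitPlane := by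
      rcases eq_or_lt_of_le ht0 with h | h
      · rw [← h]
        norm_num
      · rw [Complex.mem_slitPlane_iff]
        right
        apply moeb_im
        simp
        exact ⟨ha, h.ne'⟩
    -- derivative of tan (θ/2)
    have htan : HasDerivAt (fun θ : ℝ => Real.tan (θ/2))
        (1 / Real.cos (θ/2)^2 * (1/2)) θ := by
      exact (Real.hasDerivAt_tan hco.ne').comp θ ((hasDerivAt_id θ).div_const 2)
    have htanC : HasDerivAt (fun θ : ℝ => ((Real.tan (θ/2) : ℝ) : ℂ))
        ((1 / Real.cos (θ/2)^2 * (1/2) : ℝ) : ℂ) θ := htan.ofReal_comp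
    set d : ℂ := ((1 / Real.cos (θ/2)^2 * (1/2) : ℝ) : ℂ) with hdd
    have hN : HasDerivAt (fun θ : ℝ => 1 + a * ((Real.tan (θ/2):ℝ):ℂ)) (a * d) θ :=
      (htanC.const_mul a).const_add 1
    have hD : HasDerivAt (fun θ : ℝ => 1 - a * ((Real.tan (θ/2):ℝ):ℂ)) (-(a * d)) θ :=
      (htanC.const_mul a).const_sub 1
    have hQd : HasDerivAt (fun θ : ℝ =>
        (1 + a * ((Real.tan (θ/2):ℝ):ℂ))/(1 - a * ((Real.tan (θ/2):ℝ):ℂ)))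
        ((a * d * (1 - a * (r:ℂ)) - (1 + a * (r:ℂ)) * -(a * d)) / (1 - a * (r:ℂ))^2) θ :=
      hN.div hD hd
    have hlog : HasDerivAt Complex.log ((1 + a * (r:ℂ))/(1 - a * (r:ℂ)))⁻¹
        ((1 + a * ((Real.tan (θ/2):ℝ):ℂ))/(1 - a * ((Real.tan (θ/2):ℝ):ℂ))) :=
      Complex.hasDerivAt_log hQ
    have hcomp := (hlog.scomp θ hQd).const_mul B
    convert hcomp using 1
    case e'_4 => rfl
    case e'_8 => rfl
    -- algebra
    have hu : ((Real.cos (θ/2) : ℝ) : ℂ) ≠ 0 := Complex.ofReal_ne_zero.mpr hco.ne'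
    have hcosθ : ((Real.cos θ : ℝ):ℂ) = 2*((Real.cos (θ/2):ℝ):ℂ)^2 - 1 := by
      rw [show θ = 2*(θ/2) by ring, Real.cos_two_mul]
      push_cast
      ring
    have hrc : (r:ℂ) * ((Real.cos (θ/2):ℝ):ℂ) = ((Real.sin (θ/2):ℝ):ℂ) := by
      rw [hr]
      norm_cast
      exact Real.tan_mul_cos hco.ne'
    have hsc : ((Real.sin (θ/2):ℝ):ℂ)^2 = 1 - ((Real.cos (θ/2):ℝ):ℂ)^2 := by
      norm_cast
      have := Real.sin_sq_add_cos_sq (θ/2)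
      linarith
    have hden : 2*(Real.cos θ:ℂ) - c ≠ 0 := hdenom θ
    have hamul : a * a * (2 - c) = 2 + c := by
      rw [al_mul hc]
      field_simp
    have hdval : d = ((Real.cos (θ/2):ℝ):ℂ)⁻¹^2 * (1/2) := by
      rw [hdd]; push_cast; ring
    rw [smul_eq_mul, hdval, hB, hcosθ]
    set u : ℂ := ((Real.cos (θ/2) : ℝ) : ℂ) with hudef
    set t : ℂ := ((r : ℝ) : ℂ) with htdef
    have ht2 : t^2*u^2 = 1 - u^2 := by
      have : (t*u)^2 = ((Real.sin (θ/2):ℝ):ℂ)^2 := by rw [hrc]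
      rw [hsc] at this
      linear_combination this
    have hden2 : 2*(2*u^2 - 1) - c ≠ 0 := by
      rw [hudef, ← hcosθ]
      exact hden
    field_simp
    linear_combination (-2*u^2*t^2) * hamul + (-2*(2+c)) * ht2
  have hint : IntervalIntegrable (fun θ : ℝ => 1/(2*(Real.cos θ : ℂ) - c))
      MeasureTheory.volume 0 (Real.pi/2) := by
    apply Continuous.intervalIntegrable
    exact continuous_const.div (by continuity) hdenom
  rw [intervalIntegral.integral_eq_sub_of_hasDerivAt key hint, hG]
  have e1 : Real.pi/2/2 = Real.pi/4 := by ring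
  simp only [e1, Real.tan_pi_div_four, Real.tan_zero]
  norm_num

lemma contD (c : ℂ) (hc : c.im ≠ 0) :
    Continuous (fun θ : ℝ => 1/(2*(Real.cos θ:ℂ) - c)) :=
  continuous_const.div (by continuity) (fun θ => denom_ne hc (Real.cos θ))

lemma Jsq (c : ℂ) (hc : c.im ≠ 0) :
    ((2:ℂ)-c)*((2:ℂ)+c) * (∫ θ in (0:ℝ)..Real.pi, 1/(2*(Real.cos θ:ℂ) - c))^2
      = -(Real.pi:ℂ)^2 := by
  have hcn : (-c).im ≠ 0 := by simpa using hc
  have ha := al_im hc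
  have ha0 := al_ne hc
  have h2c := two_sub_ne hc
  have h2c' := two_add_ne hc
  set a := al c with hadef
  set J : ℂ := ∫ θ in (0:ℝ)..Real.pi, 1/(2*(Real.cos θ:ℂ) - c) with hJdef
  have hpi := Real.pi_pos
  -- split the integral
  have hsplit : J = (∫ θ in (0:ℝ)..(Real.pi/2), 1/(2*(Real.cos θ:ℂ) - c))
      + ∫ θ in (Real.pi/2)..Real.pi, 1/(2*(Real.cos θ:ℂ) - c) := by
    rw [hJdef]
    exact (intervalIntegral.integral_add_adjacent_intervals
      ((contD c hc).intervalIntegrable _ _) ((contD c hc).intervalIntegrable _ _)).symm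
  -- reflection for the second piece
  have hrefl : (∫ θ in (Real.pi/2)..Real.pi, 1/(2*(Real.cos θ:ℂ) - c))
      = - ∫ θ in (0:ℝ)..(Real.pi/2), 1/(2*(Real.cos θ:ℂ) - (-c)) := by
    have h1 := intervalIntegral.integral_comp_sub_left (a := (0:ℝ)) (b := Real.pi/2)
      (fun x => 1/(2*(Real.cos x:ℂ) - c)) Real.pi
    have h2 : ∀ θ : ℝ, (1:ℂ)/(2*(Real.cos (Real.pi - θ):ℂ) - c)
        = -(1/(2*(Real.cos θ:ℂ) - (-c))) := by
      intro θ
      rw [Real.cos_pi_sub]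
      have : 2*((-Real.cos θ : ℝ):ℂ) - c = -(2*(Real.cos θ:ℂ) - -c) := by push_cast; ring
      rw [this, div_neg]
    rw [show Real.pi - Real.pi/2 = Real.pi/2 by ring, show Real.pi - 0 = Real.pi by ring] at h1
    rw [← h1]
    rw [← intervalIntegral.integral_neg]
    apply intervalIntegral.integral_congr
    intro θ _
    exact h2 θ
  have hamul : a * a * (2 - c) = 2 + c := by
    rw [hadef, al_mul hc]; field_simp
  -- al (-c) = a⁻¹
  have haneg : al (-c) = a⁻¹ := by
    rw [hadef, al, al]
    have h1 : ((2:ℂ)+ -c)/(2 - -c) = (((2:ℂ)+c)/(2-c))⁻¹ := by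
      rw [inv_div]
      ring_nf
    rw [h1, Complex.inv_cpow]
    intro harg
    rw [Complex.arg_eq_pi_iff] at harg
    exact w_im hc harg.2
  -- value of second K
  have hKneg := K_eval (-c) hcn
  have hK := K_eval c hc
  have h1a : (1:ℂ) - a ≠ 0 := by
    intro h
    have := congrArg Complex.im h
    simp at this
    exact ha this
  have hQ2 : (1 + a⁻¹)/(1 - a⁻¹) = -((1+a)/(1-a)) := by
    have ha1 : a - 1 ≠ 0 := by
      intro h
      have := congrArg Complex.im h
      simp at this
      exact ha this
    field_simp
    ring
  set Q : ℂ := (1+a)/(1-a) with hQdef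
  have hQim : Q.im ≠ 0 := moeb_im ha
  have hD := logdiff hQim
  -- J in closed form
  have hJs : ((2-c)*a) * J = Complex.log Q - Complex.log (-Q) := by
    rw [hsplit, hrefl, hK, hKneg, haneg, hQ2]
    have h3 : (2:ℂ) - -c = 2 + c := by ring
    rw [h3, ← hadef]
    have e1 : ((2-c)*a) * (1/((2-c)*a)) = 1 := by
      field_simp
    have e2 : ((2-c)*a) * (1/((2+c)*a⁻¹)) = 1 := by
      field_simp
      linear_combination hamul
    linear_combination Complex.log Q * e1 - Complex.log (-Q) * e2
  have hs2 : ((2-c)*a)^2 = (2-c)*(2+c) := by linear_combination (2-c)*hamul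
  linear_combination hD + (((2-c)*a)*J + (Complex.log Q - Complex.log (-Q))) * hJs - J^2 * hs2

/-- the Stieltjes transform of the semicircle density satisfies
`1 + z m_sc(z) + m_sc(z)² = 0` on the upper half-plane. -/
theorem stmt_3 (z : ℂ) (hz : 0 < z.im)
    (msc : ℂ)
    (hmsc : msc = ∫ x in (-2 : ℝ)..2,
      ((Real.sqrt (max (4 - x ^ 2) 0) / (2 * Real.pi) : ℝ) : ℂ) / ((x : ℂ) - z)) :
    1 + z * msc + msc ^ 2 = 0 := by
  have hzim : z.im ≠ 0 := ne_of_gt hz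
  have hpi := Real.pi_pos
  have hπ : ((Real.pi : ℝ) : ℂ) ≠ 0 := by
    exact_mod_cast Real.pi_ne_zero
  set g : ℝ → ℂ := fun x =>
    ((Real.sqrt (max (4 - x ^ 2) 0) / (2 * Real.pi) : ℝ) : ℂ) / ((x : ℂ) - z) with hgdef
  have hxz : ∀ x : ℝ, (x:ℂ) - z ≠ 0 := by
    intro x h
    have := congrArg Complex.im h
    simp at this
    exact hzim this
  have hgcont : Continuous g := by
    apply Continuous.div
    · apply Complex.continuous_ofReal.comp
      apply Continuous.div_const
      apply Real.continuous_sqrt.comp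
      continuity
    · continuity
    · exact hxz
  -- change of variables x = 2 cos θ
  have hderiv : ∀ θ ∈ Set.uIcc (0:ℝ) Real.pi,
      HasDerivAt (fun θ : ℝ => 2*Real.cos θ) (-2*Real.sin θ) θ := by
    intro θ _
    have := (Real.hasDerivAt_cos θ).const_mul 2
    convert this using 1
    case e'_4 => rfl
    case e'_5 => rfl
    ring
  have hcv := intervalIntegral.integral_comp_smul_deriv hderiv
    ((continuous_const.mul Real.continuous_sin).continuousOn) hgcont
  simp only [Real.cos_zero, Real.cos_pi, mul_one, mul_neg_one, Function.comp] at hcv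
  -- hcv : ∫ θ in 0..π, (-2*sin θ) • g (2*cos θ) = ∫ x in 2..-2, g x
  have hm2 : msc = ∫ θ in (0:ℝ)..Real.pi, -((-2*Real.sin θ) • g (2*Real.cos θ)) := by
    rw [intervalIntegral.integral_neg, hcv, intervalIntegral.integral_symm, neg_neg, ← hmsc]
  -- pointwise identity
  set P : ℝ → ℂ := fun θ => (1/(2*((Real.pi:ℝ):ℂ))) *
    ((4 - z^2) * (1/(2*(Real.cos θ:ℂ) - z)) - (2*(Real.cos θ:ℂ) + z)) with hPdef
  have hpt : ∀ θ ∈ Set.uIcc (0:ℝ) Real.pi,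
      -((-2*Real.sin θ) • g (2*Real.cos θ)) = P θ := by
    intro θ hθ
    rw [Set.uIcc_of_le hpi.le] at hθ
    have hsin : 0 ≤ Real.sin θ := Real.sin_nonneg_of_nonneg_of_le_pi hθ.1 hθ.2
    have hsq : 4 - (2*Real.cos θ)^2 = (2*Real.sin θ)^2 := by
      nlinarith [Real.sin_sq_add_cos_sq θ]
    have hden := denom_ne hzim (Real.cos θ)
    rw [hgdef]
    simp only []
    rw [hsq, max_eq_left (sq_nonneg _), Real.sqrt_sq (by positivity)]
    rw [Complex.real_smul, hPdef]
    have hcs : ((Real.sin θ:ℝ):ℂ)^2 = 1 - ((Real.cos θ:ℝ):ℂ)^2 := by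
      norm_cast
      nlinarith [Real.sin_sq_add_cos_sq θ]
    push_cast
    have hcs' : Complex.sin (θ:ℂ) ^ 2 = 1 - Complex.cos (θ:ℂ) ^ 2 := by
      rw [← Complex.ofReal_sin, ← Complex.ofReal_cos]
      exact_mod_cast hcs
    have hden3 : 2 * Complex.cos (θ:ℂ) - z ≠ 0 := by
      rw [← Complex.ofReal_cos]
      exact denom_ne hzim _
    field_simp
    linear_combination (4:ℂ)*hcs'
  have hmP : msc = ∫ θ in (0:ℝ)..Real.pi, P θ := by
    rw [hm2]
    exact intervalIntegral.integral_congr hpt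
  -- compute the P integral
  set J : ℂ := ∫ θ in (0:ℝ)..Real.pi, 1/(2*(Real.cos θ:ℂ) - z) with hJdef
  have hint1 : IntervalIntegrable (fun θ : ℝ => (4 - z^2) * (1/(2*(Real.cos θ:ℂ) - z)))
      MeasureTheory.volume 0 Real.pi :=
    (Continuous.intervalIntegrable (continuous_const.mul (contD z hzim)) _ _)
  have hint2 : IntervalIntegrable (fun θ : ℝ => 2*(Real.cos θ:ℂ) + z)
      MeasureTheory.volume 0 Real.pi :=
    (Continuous.intervalIntegrable ((continuous_const.mul
      (Complex.continuous_ofReal.comp Real.continuous_cos)).add continuous_const) _ _)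
  have hcosint : (∫ θ in (0:ℝ)..Real.pi, (2*(Real.cos θ:ℂ) + z)) = (Real.pi:ℂ) * z := by
    have hi1 : IntervalIntegrable (fun θ : ℝ => 2*(Real.cos θ:ℂ)) MeasureTheory.volume 0 Real.pi :=
      Continuous.intervalIntegrable (by fun_prop) _ _
    rw [intervalIntegral.integral_add hi1 intervalIntegrable_const]
    rw [intervalIntegral.integral_const]
    have : (∫ θ in (0:ℝ)..Real.pi, 2*(Real.cos θ:ℂ)) = 0 := by
      rw [intervalIntegral.integral_const_mul]
      have : (∫ θ in (0:ℝ)..Real.pi, ((Real.cos θ : ℝ):ℂ)) = ((∫ θ in (0:ℝ)..Real.pi, Real.cos θ : ℝ) : ℂ) :=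
        intervalIntegral.integral_ofReal
      rw [this, integral_cos]
      simp
    rw [this, zero_add, sub_zero, Complex.real_smul]
    try ring
  have hE1 : 2*((Real.pi:ℝ):ℂ)*msc = (4 - z^2)*J - ((Real.pi:ℝ):ℂ)*z := by
    rw [hmP, hPdef]
    rw [intervalIntegral.integral_const_mul]
    rw [intervalIntegral.integral_sub hint1 hint2]
    rw [intervalIntegral.integral_const_mul, hcosint, ← hJdef]
    field_simp
    try ring
  have key2 := Jsq z hzim
  rw [← hJdef] at key2
  have hsq2 : (2*((Real.pi:ℝ):ℂ)*msc + ((Real.pi:ℝ):ℂ)*z)^2 = ((4 - z^2)*J)^2 := by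
    linear_combination (2*((Real.pi:ℝ):ℂ)*msc + ((Real.pi:ℝ):ℂ)*z + (4 - z^2)*J) * hE1
  have hfin : ((Real.pi:ℝ):ℂ)^2 * (4*(1 + z*msc + msc^2)) = 0 := by
    linear_combination hsq2 + ((4:ℂ) - z^2)*key2
  have h4 : (4:ℂ)*(1 + z*msc + msc^2) = 0 := by
    rcases mul_eq_zero.mp hfin with h | h
    · exact absurd h (pow_ne_zero 2 hπ)
    · exact h
  have := mul_eq_zero.mp h4
  rcases this with h | h
  · norm_num at h
  · exact h
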